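/- Let j : z → so(v) be of Heisenberg type, {Z₁,…,Z_r} an orthonormal basis of z, and E_{Z_α} := Σ_k X_k ∧ j_{Z_α} X_k ∈ v∧v. Then {E_{Z₁},…,E_{Z_r}} is an orthogonal set of vectors, each of norm √(2m), where m = dim v. -/
import Mathlib


open scoped RealInnerProductSpace

/-- For `j : z → so(v)` of Heisenberg type, `{Z₁,…,Z_r}` an orthonormal basis of `z` and
`E_{Z_α} = Σ_k X_k ∧ j_{Z_α} X_k ∈ v∧v`, the set `{E_{Z₁},…,E_{Z_r}}` is orthogonal and
each vector has norm `√(2m)`: the inner product `⟨E_{Z_α}, E_{Z_β}⟩`, written out as a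
double sum via `⟨X∧Y,U∧W⟩ = ⟨X,U⟩⟨Y,W⟩ - ⟨X,W⟩⟨Y,U⟩`, equals `2m` if `α = β`
and `0` otherwise. -/
theorem stmt7 {V Z : Type*}
    [NormedAddCommGroup V] [InnerProductSpace ℝ V] [FiniteDimensional ℝ V]
    [NormedAddCommGroup Z] [InnerProductSpace ℝ Z] [FiniteDimensional ℝ Z]
    (j : Z →ₗ[ℝ] (V →ₗ[ℝ] V))
    (hskew : ∀ (z : Z) (x y : V), ⟪j z x, y⟫ = -⟪x, j z y⟫)
    (hheis : ∀ z : Z, j z ∘ₗ j z = -(‖z‖ ^ 2 : ℝ) • (LinearMap.id : V →ₗ[ℝ] V))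
    (m r : ℕ) (X : OrthonormalBasis (Fin m) ℝ V) (b : OrthonormalBasis (Fin r) ℝ Z) :
    ∀ α β : Fin r,
      ∑ k : Fin m, ∑ l : Fin m,
        (⟪X k, X l⟫ * ⟪j (b α) (X k), j (b β) (X l)⟫
          - ⟪X k, j (b β) (X l)⟫ * ⟪j (b α) (X k), X l⟫)
      = if α = β then 2 * m else 0 := by
  have hJJ : ∀ (z : Z) (x : V), j z (j z x) = -(‖z‖ ^ 2 : ℝ) • x := by
    intro z x
    have := LinearMap.ext_iff.mp (hheis z) x
    simpa using this
  have hnorm : ∀ (z : Z) (x : V), ⟪j z x, j z x⟫ = ‖z‖ ^ 2 * ‖x‖ ^ 2 := by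
    intro z x
    rw [hskew z x (j z x), hJJ]
    simp [inner_smul_right, real_inner_self_eq_norm_sq]
  have key : ∀ (z w : Z) (x : V), ⟪j z x, j w x⟫ = ⟪z, w⟫ * ‖x‖ ^ 2 := by
    intro z w x
    have h := hnorm (z + w) x
    rw [map_add] at h
    simp only [LinearMap.add_apply] at h
    rw [real_inner_add_add_self] at h
    have hz := hnorm z x
    have hw := hnorm w x
    have hnz : ‖z + w‖ ^ 2 = ‖z‖ ^ 2 + 2 * ⟪z, w⟫ + ‖w‖ ^ 2 := by
      have := norm_add_sq_real z w
      linarith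
    rw [hnz] at h
    nlinarith [h, hz, hw]
  intro α β
  have hX := orthonormal_iff_ite.mp X.orthonormal
  have hb := orthonormal_iff_ite.mp b.orthonormal
  have e1 : ∀ k : Fin m, ∑ l : Fin m, ⟪X k, X l⟫ * ⟪j (b α) (X k), j (b β) (X l)⟫
      = ⟪j (b α) (X k), j (b β) (X k)⟫ := by
    intro k
    simp [hX]
  have e2 : ∀ k : Fin m, ∑ l : Fin m, ⟪X k, j (b β) (X l)⟫ * ⟪j (b α) (X k), X l⟫
      = -⟪j (b β) (X k), j (b α) (X k)⟫ := by
    intro k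
    have : ∀ l : Fin m, ⟪X k, j (b β) (X l)⟫ * ⟪j (b α) (X k), X l⟫
        = -(⟪j (b β) (X k), X l⟫ * ⟪X l, j (b α) (X k)⟫) := by
      intro l
      rw [hskew (b β) (X k) (X l), real_inner_comm (X l) (j (b α) (X k))]
      ring
    rw [Finset.sum_congr rfl fun l _ => this l, Finset.sum_neg_distrib,
      OrthonormalBasis.sum_inner_mul_inner]
  have e3 : ∀ k : Fin m,
      (∑ l : Fin m, (⟪X k, X l⟫ * ⟪j (b α) (X k), j (b β) (X l)⟫
        - ⟪X k, j (b β) (X l)⟫ * ⟪j (b α) (X k), X l⟫))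
      = 2 * (if α = β then 1 else 0) := by
    intro k
    rw [Finset.sum_sub_distrib, e1, e2, sub_neg_eq_add, key, key,
      real_inner_comm (b β) (b α), hb, X.orthonormal.1 k]
    by_cases h : α = β <;> simp [h, eq_comm] <;> norm_num
  rw [Finset.sum_congr rfl fun k _ => e3 k]
  by_cases h : α = β <;> simp [h, Finset.sum_const, Finset.card_fin] <;> ring
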